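/- Let Φ = (φ_{x,t}) satisfy conditions (a) φ_{x,1} and φ_{y,1} have disjoint supports for x≠y, (b) φ_{x,t}(X) = t, (c) φ_{x,s} ≤ φ_{x,t} for s < t. Then for probability measures μ, ν on X, (Σ_{x∈S_μ} φ_{x,μ({x})}) ∧ (Σ_{x∈S_ν} φ_{x,ν({x})}) has total mass equal to Σ_{x ∈ S_μ ∩ S_ν} min(μ({x}), ν({x})) = (μ∧ν)(X). -/

import Mathlib

open scoped ENNReal

/-- Under conditions (a)-(c) on the family Φ = (φ_{x,t}), the pointwise minimum
of Σ_{x∈S_μ} φ_{x,μ({x})} and Σ_{x∈S_ν} φ_{x,ν({x})} has total mass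
Σ_{x ∈ S_μ ∩ S_ν} min(μ({x}), ν({x})) = (μ∧ν)(X). -/
theorem family_min_mass {X : Type*} [Countable X]
    (φ : X → ℝ≥0∞ → (X → ℝ≥0∞))
    (ha : ∀ x y : X, x ≠ y → {z | 0 < φ x 1 z} ∩ {z | 0 < φ y 1 z} = ∅)
    (hb : ∀ (x : X) (t : ℝ≥0∞), 0 < t → t ≤ 1 → ∑' z, φ x t z = t)
    (hc : ∀ (x : X) (s t : ℝ≥0∞), 0 < s → s < t → t ≤ 1 → ∀ z, φ x s z ≤ φ x t z)
    (μ ν : X → ℝ≥0∞) (hμ : ∑' x, μ x = 1) (hν : ∑' x, ν x = 1) :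
    ∑' z, min (∑' x : X, if 0 < μ x then φ x (μ x) z else 0)
              (∑' x : X, if 0 < ν x then φ x (ν x) z else 0)
      = ∑' x, min (μ x) (ν x) := by
  have hμ1 : ∀ x, μ x ≤ 1 := fun x => hμ ▸ ENNReal.le_tsum x
  have hν1 : ∀ x, ν x ≤ 1 := fun x => hν ▸ ENNReal.le_tsum x
  have hmono : ∀ (x : X) (s t : ℝ≥0∞), 0 < s → s ≤ t → t ≤ 1 → ∀ z, φ x s z ≤ φ x t z := by
    intro x s t hs hst ht1 z
    rcases lt_or_eq_of_le hst with h | h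
    · exact hc x s t hs h ht1 z
    · rw [h]
  have hfle : ∀ x z, (if 0 < μ x then φ x (μ x) z else 0) ≤ φ x 1 z := by
    intro x z
    split
    · exact hmono x (μ x) 1 ‹_› (hμ1 x) le_rfl z
    · exact zero_le
  have hgle : ∀ x z, (if 0 < ν x then φ x (ν x) z else 0) ≤ φ x 1 z := by
    intro x z
    split
    · exact hmono x (ν x) 1 ‹_› (hν1 x) le_rfl z
    · exact zero_le
  have hdisj : ∀ x y z, x ≠ y → 0 < φ x 1 z → φ y 1 z = 0 := by
    intro x y z hxy hx
    by_contra h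
    have hy : 0 < φ y 1 z := pos_iff_ne_zero.mpr h
    have hz : z ∈ ({z | 0 < φ x 1 z} ∩ {z | 0 < φ y 1 z}) := ⟨hx, hy⟩
    rw [ha x y hxy] at hz
    exact hz
  have key : ∀ z, min (∑' x : X, if 0 < μ x then φ x (μ x) z else 0)
      (∑' x : X, if 0 < ν x then φ x (ν x) z else 0)
      = ∑' x : X, min (if 0 < μ x then φ x (μ x) z else 0)
          (if 0 < ν x then φ x (ν x) z else 0) := by
    intro z
    by_cases h : ∃ x0, 0 < φ x0 1 z
    · obtain ⟨x0, hx0⟩ := h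
      have hzero : ∀ (F : X → ℝ≥0∞), (∀ x, F x ≤ φ x 1 z) → ∀ y, y ≠ x0 → F y = 0 := by
        intro F hF y hy
        have h0 := hdisj x0 y z (fun e => hy e.symm) hx0
        exact le_antisymm (h0 ▸ hF y) (zero_le)
      rw [tsum_eq_single x0 (hzero _ (fun x => hfle x z)),
          tsum_eq_single x0 (hzero _ (fun x => hgle x z)),
          tsum_eq_single x0 (fun y hy => by
            rw [hzero _ (fun x => hfle x z) y hy, hzero _ (fun x => hgle x z) y hy]; simp)]
    · push_neg at h
      have hz : ∀ x, φ x 1 z = 0 := fun x => le_antisymm (h x) (zero_le)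
      have hf0 : ∀ x, (if 0 < μ x then φ x (μ x) z else 0) = 0 :=
        fun x => le_antisymm ((hz x) ▸ hfle x z) (zero_le)
      have hg0 : ∀ x, (if 0 < ν x then φ x (ν x) z else 0) = 0 :=
        fun x => le_antisymm ((hz x) ▸ hgle x z) (zero_le)
      simp [hf0, hg0]
  rw [tsum_congr key, ENNReal.tsum_comm]
  refine tsum_congr fun x => ?_
  by_cases hμx : 0 < μ x
  · by_cases hνx : 0 < ν x
    · rcases le_total (μ x) (ν x) with hle | hle
      · have hpt : ∀ z, min (if 0 < μ x then φ x (μ x) z else 0)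
            (if 0 < ν x then φ x (ν x) z else 0) = φ x (μ x) z := by
          intro z
          rw [if_pos hμx, if_pos hνx]
          exact min_eq_left (hmono x (μ x) (ν x) hμx hle (hν1 x) z)
        rw [tsum_congr hpt, hb x (μ x) hμx (hμ1 x), min_eq_left hle]
      · have hpt : ∀ z, min (if 0 < μ x then φ x (μ x) z else 0)
            (if 0 < ν x then φ x (ν x) z else 0) = φ x (ν x) z := by
          intro z
          rw [if_pos hμx, if_pos hνx]
          exact min_eq_right (hmono x (ν x) (μ x) hνx hle (hμ1 x) z)
        rw [tsum_congr hpt, hb x (ν x) hνx (hν1 x), min_eq_right hle]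
    · have hν0 : ν x = 0 := le_antisymm (not_lt.mp hνx) (zero_le)
      simp [hνx, hν0]
  · have hμ0 : μ x = 0 := le_antisymm (not_lt.mp hμx) (zero_le)
    simp [hμx, hμ0]
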